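/- Let X be a real-valued random variable with Pr[|X| ≥ s] ≤ B·e^{−βs} for all s > 0, where B, β > 0. Let k ≥ 1 be an integer, let R > 0, set W = 8k/β, and define g(t) = 1 + 2·(t − R/4)/(W + R/4). Then E[(2·g(X))^{2k} · 1{X ≤ −W}] ≤ B · (2^{2k} e^{−8k} + (2k)^{−2k} (2k)!) ≤ B. -/

import Mathlib

open MeasureTheory

private lemma fact_le_pow_pred : ∀ n : ℕ, 1 ≤ n → Nat.factorial n ≤ n ^ (n - 1) := by
  intro n
  induction n with
  | zero => intro h; omega
  | succ m ih =>
    intro _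
    rcases Nat.eq_zero_or_pos m with hm | hm
    · subst hm; simp [Nat.factorial]
    · have h1 : Nat.factorial (m + 1) = (m + 1) * Nat.factorial m := rfl
      have h2 := ih hm
      calc Nat.factorial (m + 1) = (m + 1) * Nat.factorial m := rfl
        _ ≤ (m + 1) * m ^ (m - 1) := Nat.mul_le_mul_left _ h2
        _ ≤ (m + 1) * (m + 1) ^ (m - 1) :=
            Nat.mul_le_mul_left _ (Nat.pow_le_pow_left (by omega) _)
        _ = (m + 1) ^ (m - 1 + 1) := by ring
        _ = (m + 1) ^ (m + 1 - 1) := by congr 1; omega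

set_option maxHeartbeats 2000000 in
theorem stmt10 (ν : Measure ℝ) [IsProbabilityMeasure ν]
    (B β : ℝ) (hB : 0 < B) (hβ : 0 < β)
    (htail : ∀ s : ℝ, 0 < s → (ν {x | s ≤ |x|}).toReal ≤ B * Real.exp (-β * s))
    (k : ℕ) (hk : 1 ≤ k) (R : ℝ) (hR : 0 < R)
    (W : ℝ) (hW : W = 8 * k / β)
    (g : ℝ → ℝ) (hg : ∀ t, g t = 1 + 2 * (t - R / 4) / (W + R / 4)) :
    (∫⁻ x in {x : ℝ | x ≤ -W}, ENNReal.ofReal ((2 * g x) ^ (2 * k)) ∂ν)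
        ≤ ENNReal.ofReal (B * (2 ^ (2 * k) * Real.exp (-(8 * k))
            + ((2 * k : ℝ))⁻¹ ^ (2 * k) * (Nat.factorial (2 * k))))
      ∧ B * (2 ^ (2 * k) * Real.exp (-(8 * k))
            + ((2 * k : ℝ))⁻¹ ^ (2 * k) * (Nat.factorial (2 * k))) ≤ B := by
  have hk1 : (1 : ℝ) ≤ k := by exact_mod_cast hk
  have hkpos : (0 : ℝ) < k := by linarith
  -- second conjunct first
  have hsecond : B * (2 ^ (2 * k) * Real.exp (-(8 * k))
      + ((2 * k : ℝ))⁻¹ ^ (2 * k) * (Nat.factorial (2 * k))) ≤ B := by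
    have h2k : (2 : ℝ) * k ≠ 0 := by positivity
    have hterm1 : (2 : ℝ) ^ (2 * k) * Real.exp (-(8 * k)) ≤ 1 / 2 := by
      have hexp : (2 : ℝ) ^ (8 * k) ≤ Real.exp (8 * k) := by
        have h2e : (2 : ℝ) ≤ Real.exp 1 := by
          have := Real.exp_one_gt_d9; linarith
        calc (2 : ℝ) ^ (8 * k) ≤ (Real.exp 1) ^ (8 * k) :=
              pow_le_pow_left₀ (by norm_num) h2e _
          _ = Real.exp ((8 * k : ℕ)) := by
              rw [← Real.exp_nat_mul]; norm_num
          _ = Real.exp (8 * k) := by push_cast; ring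
      have hepos : (0:ℝ) < Real.exp (8 * k) := Real.exp_pos _
      have hexp2 : Real.exp (-(8 * (k:ℝ))) = (Real.exp (8 * k))⁻¹ := by
        rw [← Real.exp_neg]
      rw [hexp2]
      rw [div_eq_mul_inv, one_mul]
      have hle : (2:ℝ)^(2*k) * 2 ≤ 2 ^ (8*k) := by
        have : (2:ℝ)^(2*k) * 2 = 2 ^ (2*k+1) := by ring
        rw [this]
        exact pow_le_pow_right₀ (by norm_num) (by omega)
      have h2pos : (0:ℝ) < 2 ^ (8*k) := by positivity
      calc (2:ℝ)^(2*k) * (Real.exp (8*k))⁻¹ ≤ 2^(2*k) * (2^(8*k))⁻¹ := by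
            gcongr
        _ ≤ (2:ℝ)⁻¹ := by
            rw [mul_inv_le_iff₀ h2pos]
            linarith
    have hterm2 : ((2 * k : ℝ))⁻¹ ^ (2 * k) * (Nat.factorial (2 * k)) ≤ 1 / 2 := by
      have hfac : (Nat.factorial (2 * k) : ℝ) ≤ ((2 * k : ℕ) : ℝ) ^ (2 * k - 1) := by
        exact_mod_cast Nat.cast_le.mpr (fact_le_pow_pred (2 * k) (by omega))
      have h2kpos : (0:ℝ) < 2 * k := by positivity
      have hcast : ((2 * k : ℕ) : ℝ) = 2 * (k : ℝ) := by push_cast; ring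
      have key : ((2 * k : ℝ))⁻¹ ^ (2 * k) * (Nat.factorial (2 * k))
          ≤ ((2 * k : ℝ))⁻¹ ^ (2 * k) * (2 * (k:ℝ)) ^ (2 * k - 1) := by
        gcongr
        rw [← hcast]; exact hfac
      have heq : ((2 * k : ℝ))⁻¹ ^ (2 * k) * (2 * (k:ℝ)) ^ (2 * k - 1) = (2 * (k:ℝ))⁻¹ := by
        have h1 : 2 * k = (2 * k - 1) + 1 := by omega
        rw [h1, pow_succ, inv_pow, ← inv_pow]
        field_simp
        rw [Nat.add_sub_cancel, ← mul_pow, one_div, inv_mul_cancel₀ h2k, one_pow]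
      rw [heq] at key
      calc ((2 * k : ℝ))⁻¹ ^ (2 * k) * (Nat.factorial (2 * k)) ≤ (2 * (k:ℝ))⁻¹ := key
        _ ≤ 1 / 2 := by
            rw [one_div]
            apply inv_anti₀ (by norm_num)
            linarith
    calc B * (2 ^ (2 * k) * Real.exp (-(8 * k))
          + ((2 * k : ℝ))⁻¹ ^ (2 * k) * (Nat.factorial (2 * k)))
        ≤ B * (1 / 2 + 1 / 2) := by
          apply mul_le_mul_of_nonneg_left _ hB.le
          exact add_le_add hterm1 hterm2
      _ = B := by ring
  refine ⟨?_, hsecond⟩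
  -- main inequality
  have hWpos : 0 < W := by rw [hW]; positivity
  have hβW : β * W = 8 * k := by rw [hW]; field_simp
  set p : ℝ := ((2 * k : ℕ) : ℝ) with hp
  have hp2 : p = 2 * (k : ℝ) := by rw [hp]; push_cast; ring
  have hppos : 0 < p := by rw [hp2]; positivity
  set S : Set ℝ := {x : ℝ | x ≤ -W} with hSdef
  have hSmeas : MeasurableSet S := measurableSet_Iic (a := -W)
  set f : ℝ → ℝ := fun x => max (-(2 * g x)) 0 with hfdef
  have hfnn : ∀ x, 0 ≤ f x := fun x => le_max_right _ _
  have hgeq : g = fun t => 1 + 2 * (t - R / 4) / (W + R / 4) := funext hg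
  have hfm : Measurable f := by
    rw [hfdef, hgeq]; fun_prop
  have hD : 0 < W + R / 4 := by positivity
  have hfS : ∀ x ∈ S, 2 ≤ f x ∧ f x = -(2 * g x) := by
    intro x hx
    have hx' : x ≤ -W := hx
    have h1 : 2 * g x ≤ -2 := by
      rw [hg x]
      have hxR : x - R / 4 ≤ -(W + R / 4) := by linarith
      have h2 : 2 * (x - R / 4) / (W + R / 4) ≤ -2 := by
        rw [div_le_iff₀ hD]; nlinarith
      linarith
    have hmax : f x = -(2 * g x) := by
      simp only [hfdef]; rw [max_eq_left (by linarith)]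
    exact ⟨by rw [hmax]; linarith, hmax⟩
  have hint : (∫⁻ x in S, ENNReal.ofReal ((2 * g x) ^ (2 * k)) ∂ν)
      = ∫⁻ x, ENNReal.ofReal (f x ^ p) ∂(ν.restrict S) := by
    apply lintegral_congr_ae
    filter_upwards [ae_restrict_mem hSmeas] with x hx
    obtain ⟨h2, heq⟩ := hfS x hx
    rw [hp, Real.rpow_natCast, heq, Even.neg_pow (even_two_mul k)]
  have hν : ∀ s : ℝ, 0 < s → ν {x | s ≤ |x|} ≤ ENNReal.ofReal (B * Real.exp (-β * s)) := by
    intro s hs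
    have h2 : ν {x | s ≤ |x|} ≠ ⊤ := measure_ne_top ν _
    rw [← ENNReal.ofReal_toReal h2]
    exact ENNReal.ofReal_le_ofReal (htail s hs)
  have hm1 : ∀ t : ℝ, (ν.restrict S) {a | t ≤ f a}
      ≤ ENNReal.ofReal (B * Real.exp (-(8 * k))) := by
    intro t
    rw [Measure.restrict_apply' hSmeas]
    have hsub : {a | t ≤ f a} ∩ S ⊆ {x | W ≤ |x|} := by
      rintro x ⟨-, hx⟩
      have hx' : x ≤ -W := hx
      simp only [Set.mem_setOf_eq]
      rw [abs_of_nonpos (by linarith)]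
      linarith
    calc ν ({a | t ≤ f a} ∩ S) ≤ ν {x | W ≤ |x|} := measure_mono hsub
      _ ≤ ENNReal.ofReal (B * Real.exp (-β * W)) := hν W hWpos
      _ = ENNReal.ofReal (B * Real.exp (-(8 * k))) := by
          rw [show -β * W = -(8 * (k:ℝ)) by linear_combination -hβW]
  have hm2 : ∀ t : ℝ, 2 ≤ t → (ν.restrict S) {a | t ≤ f a}
      ≤ ENNReal.ofReal (B * Real.exp (-(2 * k * t) - 4 * k)) := by
    intro t ht
    rw [Measure.restrict_apply' hSmeas]
    have hsub : {a | t ≤ f a} ∩ S ⊆ {x | (t + 2) * W / 4 ≤ |x|} := by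
      rintro x ⟨hxf, hxS⟩
      have hxW : x ≤ -W := hxS
      obtain ⟨h2, heq⟩ := hfS x hxS
      have hfx : t ≤ f x := hxf
      rw [heq, hg x] at hfx
      have h3 : t + 2 ≤ 4 * (R / 4 - x) / (W + R / 4) := by
        have hident : -(2 * (1 + 2 * (x - R / 4) / (W + R / 4)))
            = -2 + 4 * (R / 4 - x) / (W + R / 4) := by ring
        rw [hident] at hfx
        linarith
      have h5 : (t + 2) * (W + R / 4) ≤ 4 * (R / 4 - x) := by
        rw [le_div_iff₀ hD] at h3; linarith
      have h6 : (t + 2) * W ≤ -4 * x := by nlinarith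
      simp only [Set.mem_setOf_eq]
      rw [abs_of_nonpos (by linarith)]
      nlinarith
    calc ν ({a | t ≤ f a} ∩ S) ≤ ν {x | (t + 2) * W / 4 ≤ |x|} := measure_mono hsub
      _ ≤ ENNReal.ofReal (B * Real.exp (-β * ((t + 2) * W / 4))) := by
          apply hν; positivity
      _ = ENNReal.ofReal (B * Real.exp (-(2 * k * t) - 4 * k)) := by
          rw [show -β * ((t + 2) * W / 4) = -(2 * (k:ℝ) * t) - 4 * k by
            linear_combination (-(t + 2) / 4) * hβW]
  -- layer cake
  have lc := lintegral_rpow_eq_lintegral_meas_le_mul (ν.restrict S)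
      (Filter.Eventually.of_forall hfnn) hfm.aemeasurable hppos
  -- the Ioc part
  have hJ1 : ∫⁻ t in Set.Ioc (0:ℝ) 2, ENNReal.ofReal (t ^ (p - 1))
      = ENNReal.ofReal (2 ^ p / p) := by
    rw [← ofReal_integral_eq_lintegral_ofReal]
    · congr 1
      rw [← intervalIntegral.integral_of_le (by norm_num : (0:ℝ) ≤ 2),
        integral_rpow (Or.inl (by linarith : (-1:ℝ) < p - 1)), sub_add_cancel,
        Real.zero_rpow hppos.ne']
      ring
    · have := intervalIntegral.intervalIntegrable_rpow' (a := 0) (b := 2) (r := p - 1)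
        (by linarith)
      rwa [intervalIntegrable_iff_integrableOn_Ioc_of_le (by norm_num : (0:ℝ) ≤ 2)] at this
    · filter_upwards [ae_restrict_mem measurableSet_Ioc] with t ht
      exact Real.rpow_nonneg ht.1.le _
  have hI1 : ∫⁻ t in Set.Ioc (0:ℝ) 2,
        (ν.restrict S) {a | t ≤ f a} * ENNReal.ofReal (t ^ (p - 1))
      ≤ ENNReal.ofReal (B * Real.exp (-(8 * k)) * (2 ^ p / p)) := by
    calc ∫⁻ t in Set.Ioc (0:ℝ) 2,
          (ν.restrict S) {a | t ≤ f a} * ENNReal.ofReal (t ^ (p - 1))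
        ≤ ∫⁻ t in Set.Ioc (0:ℝ) 2,
            ENNReal.ofReal (B * Real.exp (-(8 * k))) * ENNReal.ofReal (t ^ (p - 1)) := by
          apply lintegral_mono
          intro t
          exact mul_le_mul_left (hm1 t) _
      _ = ENNReal.ofReal (B * Real.exp (-(8 * k)))
            * ∫⁻ t in Set.Ioc (0:ℝ) 2, ENNReal.ofReal (t ^ (p - 1)) := by
          rw [lintegral_const_mul]
          fun_prop
      _ = ENNReal.ofReal (B * Real.exp (-(8 * k)) * (2 ^ p / p)) := by
          rw [hJ1, ← ENNReal.ofReal_mul (by positivity)]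
  -- the Ioi part
  have h2kpos : (0:ℝ) < 2 * k := by positivity
  have hJ2 : ∫⁻ t in Set.Ioi (0:ℝ), ENNReal.ofReal (t ^ (p - 1) * Real.exp (-(2 * k * t)))
      = ENNReal.ofReal ((1 / (2 * (k:ℝ))) ^ p * Real.Gamma p) := by
    rw [← ofReal_integral_eq_lintegral_ofReal]
    · congr 1
      exact Real.integral_rpow_mul_exp_neg_mul_Ioi hppos h2kpos
    · have := integrableOn_rpow_mul_exp_neg_mul_rpow (p := 1) (s := p - 1) (b := 2 * k)
        (by linarith) zero_lt_one h2kpos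
      simpa [Real.rpow_one, IntegrableOn] using this
    · filter_upwards [ae_restrict_mem measurableSet_Ioi] with t ht
      have : (0:ℝ) < t := ht
      positivity
  have hI2 : ∫⁻ t in Set.Ioi (2:ℝ),
        (ν.restrict S) {a | t ≤ f a} * ENNReal.ofReal (t ^ (p - 1))
      ≤ ENNReal.ofReal (B * Real.exp (-(4 * k))
          * ((1 / (2 * (k:ℝ))) ^ p * Real.Gamma p)) := by
    calc ∫⁻ t in Set.Ioi (2:ℝ),
          (ν.restrict S) {a | t ≤ f a} * ENNReal.ofReal (t ^ (p - 1))
        ≤ ∫⁻ t in Set.Ioi (2:ℝ), ENNReal.ofReal (B * Real.exp (-(4 * k)))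
            * ENNReal.ofReal (t ^ (p - 1) * Real.exp (-(2 * k * t))) := by
          apply lintegral_mono_ae
          filter_upwards [ae_restrict_mem measurableSet_Ioi] with t ht
          have h2t : (2:ℝ) ≤ t := le_of_lt ht
          calc (ν.restrict S) {a | t ≤ f a} * ENNReal.ofReal (t ^ (p - 1))
              ≤ ENNReal.ofReal (B * Real.exp (-(2 * k * t) - 4 * k))
                  * ENNReal.ofReal (t ^ (p - 1)) := by
                gcongr
                exact hm2 t h2t
            _ = ENNReal.ofReal (B * Real.exp (-(4 * k)))
                  * ENNReal.ofReal (t ^ (p - 1) * Real.exp (-(2 * k * t))) := by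
                rw [← ENNReal.ofReal_mul (by positivity), ← ENNReal.ofReal_mul (by positivity)]
                congr 1
                rw [show Real.exp (-(2 * k * t) - 4 * k)
                    = Real.exp (-(4 * k)) * Real.exp (-(2 * k * t)) by
                  rw [← Real.exp_add]; ring_nf]
                ring
      _ = ENNReal.ofReal (B * Real.exp (-(4 * k)))
            * ∫⁻ t in Set.Ioi (2:ℝ), ENNReal.ofReal (t ^ (p - 1) * Real.exp (-(2 * k * t))) := by
          rw [lintegral_const_mul]
          fun_prop
      _ ≤ ENNReal.ofReal (B * Real.exp (-(4 * k)))
            * ∫⁻ t in Set.Ioi (0:ℝ), ENNReal.ofReal (t ^ (p - 1) * Real.exp (-(2 * k * t))) := by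
          gcongr
          norm_num
      _ = ENNReal.ofReal (B * Real.exp (-(4 * k))
            * ((1 / (2 * (k:ℝ))) ^ p * Real.Gamma p)) := by
          rw [hJ2, ← ENNReal.ofReal_mul (by positivity)]
  -- split the integral
  have hsplit : ∫⁻ t in Set.Ioi (0:ℝ),
        (ν.restrict S) {a | t ≤ f a} * ENNReal.ofReal (t ^ (p - 1))
      = (∫⁻ t in Set.Ioc (0:ℝ) 2,
          (ν.restrict S) {a | t ≤ f a} * ENNReal.ofReal (t ^ (p - 1)))
        + ∫⁻ t in Set.Ioi (2:ℝ),
            (ν.restrict S) {a | t ≤ f a} * ENNReal.ofReal (t ^ (p - 1)) := by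
    rw [← Set.Ioc_union_Ioi_eq_Ioi (by norm_num : (0:ℝ) ≤ 2),
      lintegral_union measurableSet_Ioi Set.Ioc_disjoint_Ioi_same]
  -- Gamma value
  have hGamma : Real.Gamma p = Nat.factorial (2 * k - 1) := by
    have h : p = ((2 * k - 1 : ℕ) : ℝ) + 1 := by
      rw [hp, Nat.cast_sub (by omega : 1 ≤ 2 * k)]
      push_cast
      ring
    rw [h, Real.Gamma_nat_eq_factorial]
  -- final real arithmetic
  have hreal : p * (B * Real.exp (-(8 * k)) * (2 ^ p / p)
        + B * Real.exp (-(4 * k)) * ((1 / (2 * (k:ℝ))) ^ p * Real.Gamma p))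
      ≤ B * (2 ^ (2 * k) * Real.exp (-(8 * k))
        + ((2 * k : ℝ))⁻¹ ^ (2 * k) * (Nat.factorial (2 * k))) := by
    rw [hGamma]
    have h2p : (2:ℝ) ^ p = 2 ^ (2 * k) := by
      rw [hp, Real.rpow_natCast]
    have hinvp : (1 / (2 * (k:ℝ))) ^ p = ((2 * k : ℝ))⁻¹ ^ (2 * k) := by
      rw [hp, Real.rpow_natCast, one_div]
    rw [h2p, hinvp]
    have hfact : (2 * (k:ℝ)) * (Nat.factorial (2 * k - 1) : ℝ)
        = (Nat.factorial (2 * k) : ℝ) := by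
      rw [show (2 * (k:ℝ)) = ((2 * k : ℕ) : ℝ) by push_cast; ring]
      rw [← Nat.cast_mul, Nat.mul_factorial_pred (by omega : 2 * k ≠ 0)]
    have hexple : Real.exp (-(4 * (k:ℝ))) ≤ 1 := Real.exp_le_one_iff.mpr (neg_nonpos.mpr (by positivity))
    have hexpand : p * (B * Real.exp (-(8 * k)) * (2 ^ (2 * k) / p)
          + B * Real.exp (-(4 * k)) * (((2 * k : ℝ))⁻¹ ^ (2 * k)
            * (Nat.factorial (2 * k - 1) : ℝ)))
        = B * Real.exp (-(8 * k)) * 2 ^ (2 * k)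
          + B * Real.exp (-(4 * k)) * (((2 * k : ℝ))⁻¹ ^ (2 * k)
            * ((2 * (k:ℝ)) * (Nat.factorial (2 * k - 1) : ℝ))) := by
      rw [hp2]
      have hc : 2 * (k:ℝ) * (B * Real.exp (-(8 * k)) * (2 ^ (2 * k) / (2 * (k:ℝ))))
          = B * Real.exp (-(8 * k)) * 2 ^ (2 * k) := by
        field_simp
      rw [mul_add, hc]
      ring
    rw [hexpand, hfact]
    set X : ℝ := ((2 * k : ℝ))⁻¹ ^ (2 * k) * (Nat.factorial (2 * k) : ℝ) with hX
    have hXnn : 0 ≤ X := by rw [hX]; positivity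
    have hkey : B * Real.exp (-(4 * (k:ℝ))) * X ≤ B * X := by
      calc B * Real.exp (-(4 * (k:ℝ))) * X = (B * X) * Real.exp (-(4 * (k:ℝ))) := by ring
        _ ≤ (B * X) * 1 := mul_le_mul_of_nonneg_left hexple (mul_nonneg hB.le hXnn)
        _ = B * X := mul_one _
    have hexpand2 : B * (2 ^ (2 * k) * Real.exp (-(8 * (k:ℝ))) + X)
        = B * Real.exp (-(8 * (k:ℝ))) * 2 ^ (2 * k) + B * X := by ring
    rw [hexpand2]
    linarith
  -- put everything together
  calc (∫⁻ x in S, ENNReal.ofReal ((2 * g x) ^ (2 * k)) ∂ν)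
      = ENNReal.ofReal p * ∫⁻ t in Set.Ioi (0:ℝ),
          (ν.restrict S) {a | t ≤ f a} * ENNReal.ofReal (t ^ (p - 1)) := by
        rw [hint, lc]
    _ ≤ ENNReal.ofReal p * (ENNReal.ofReal (B * Real.exp (-(8 * k)) * (2 ^ p / p))
          + ENNReal.ofReal (B * Real.exp (-(4 * k))
            * ((1 / (2 * (k:ℝ))) ^ p * Real.Gamma p))) := by
        rw [hsplit]
        gcongr
    _ = ENNReal.ofReal (p * (B * Real.exp (-(8 * k)) * (2 ^ p / p)
          + B * Real.exp (-(4 * k)) * ((1 / (2 * (k:ℝ))) ^ p * Real.Gamma p))) := by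
        rw [← ENNReal.ofReal_add (by positivity) (by positivity),
          ← ENNReal.ofReal_mul hppos.le]
    _ ≤ ENNReal.ofReal (B * (2 ^ (2 * k) * Real.exp (-(8 * k))
          + ((2 * k : ℝ))⁻¹ ^ (2 * k) * (Nat.factorial (2 * k)))) :=
        ENNReal.ofReal_le_ofReal hreal
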